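/- Let a > 1 be real and n ≥ 1 an integer. Then ∫_0^∞ s^{n−1} e^{−a s} I_0(s) ds = Γ(n) a^{−n} · Σ_{m=0}^∞ [ (n/2)_m ((n+1)/2)_m / ((1)_m m!) ] a^{−2m}, where I_0(s) = Σ_{m=0}^∞ (s/2)^{2m}/(m!)^2, (x)_m := Γ(x+m)/Γ(x) is the Pochhammer symbol, and the series on the right is the Gauss hypergeometric series ₂F₁(n/2, (n+1)/2; 1; 1/a^2). -/

import Mathlib

open MeasureTheory Set

/-- The modified Bessel function of the first kind of order 0,
`I₀(s) = Σ_{m=0}^∞ (s/2)^{2m} / (m!)²`. -/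
noncomputable def besselI0 (s : ℝ) : ℝ :=
  ∑' m : ℕ, (s / 2) ^ (2 * m) / ((Nat.factorial m : ℝ)) ^ 2

/-- The Pochhammer symbol `(x)_m = Γ(x + m) / Γ(x)`. -/
noncomputable def poch (x : ℝ) (m : ℕ) : ℝ := Real.Gamma (x + m) / Real.Gamma x

/-- The Gauss hypergeometric series `₂F₁(a, b; 1; z) = Σ_m (a)_m (b)_m / ((1)_m m!) z^m`. -/
noncomputable def hyp2F1one (a b z : ℝ) : ℝ :=
  ∑' m : ℕ, (poch a m * poch b m / (poch 1 m * (Nat.factorial m : ℝ))) * z ^ m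

/-- For real `a > 1` and integer `n ≥ 1`,
`∫₀^∞ s^{n-1} e^{-as} I₀(s) ds = Γ(n) a^{-n} ₂F₁(n/2, (n+1)/2; 1; 1/a²)`. -/

lemma poch_zero' {x : ℝ} (hx : 0 < x) : poch x 0 = 1 := by
  simp [poch, div_self (Real.Gamma_pos_of_pos hx).ne']

lemma poch_succ' {x : ℝ} (hx : 0 < x) (m : ℕ) :
    poch x (m + 1) = poch x m * (x + m) := by
  have h1 : x + (m : ℝ) ≠ 0 := by positivity
  have h2 : x + ((m + 1 : ℕ) : ℝ) = (x + m) + 1 := by push_cast; ring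
  rw [poch, poch, h2, Real.Gamma_add_one h1]
  ring

lemma poch_pos' {x : ℝ} (hx : 0 < x) (m : ℕ) : 0 < poch x m :=
  div_pos (Real.Gamma_pos_of_pos (by positivity)) (Real.Gamma_pos_of_pos hx)

lemma poch_one' (m : ℕ) : poch 1 m = m.factorial := by
  rw [poch, show (1:ℝ) + m = (m:ℝ) + 1 by ring, Real.Gamma_nat_eq_factorial,
    Real.Gamma_one, div_one]

lemma Gamma_mul_poch {x : ℝ} (hx : 0 < x) (m : ℕ) :
    Real.Gamma (x + m) = Real.Gamma x * poch x m := by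
  have hΓ : Real.Gamma x ≠ 0 := (Real.Gamma_pos_of_pos hx).ne'
  simp only [poch]
  field_simp

lemma poch_dup {x : ℝ} (hx : 0 < x) (m : ℕ) :
    poch (x/2) m * poch ((x+1)/2) m * 4 ^ m = poch x (2*m) := by
  have h2 : (0:ℝ) < x/2 := by linarith
  have h3 : (0:ℝ) < (x+1)/2 := by linarith
  induction m with
  | zero => simp [poch_zero' hx, poch_zero' h2, poch_zero' h3]
  | succ m ih =>
    have e1 : 2*(m+1) = (2*m+1)+1 := by ring
    rw [e1, poch_succ' hx, poch_succ' hx, poch_succ' h2, poch_succ' h3, ← ih]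
    push_cast
    ring

lemma integral_pow_exp {a : ℝ} (ha : 0 < a) (k : ℕ) :
    ∫ s in Ioi (0:ℝ), s ^ k * Real.exp (-a * s)
      = Real.Gamma ((k:ℝ) + 1) / a ^ (k+1) := by
  have h := Real.integral_rpow_mul_exp_neg_mul_Ioi (a := (k:ℝ) + 1) (r := a) (by positivity) ha
  rw [show (∫ s in Ioi (0:ℝ), s ^ k * Real.exp (-a * s))
      = ∫ t in Ioi (0:ℝ), t ^ ((k:ℝ)+1-1) * Real.exp (-(a*t)) from
    setIntegral_congr_fun measurableSet_Ioi (fun t ht => by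
      rw [add_sub_cancel_right, Real.rpow_natCast, neg_mul]), h,
    show ((k:ℝ)+1) = ((k+1 : ℕ):ℝ) by push_cast; ring, Real.rpow_natCast, div_pow, one_pow]
  push_cast
  ring

lemma integrable_pow_exp {a : ℝ} (ha : 0 < a) (k : ℕ) :
    IntegrableOn (fun s => s ^ k * Real.exp (-a * s)) (Ioi (0:ℝ)) := by
  have h := integrableOn_rpow_mul_exp_neg_mul_rpow (p := 1) (s := (k:ℝ)) (b := a)
    (lt_of_lt_of_le neg_one_lt_zero (Nat.cast_nonneg k)) one_pos ha
  refine h.congr_fun (fun t ht => ?_) measurableSet_Ioi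
  beta_reduce
  rw [Real.rpow_natCast, Real.rpow_one]

theorem integral_bessel_moment (a : ℝ) (ha : 1 < a) (n : ℕ) (hn : 1 ≤ n) :
    ∫ s in Set.Ioi (0:ℝ), s ^ (n - 1) * Real.exp (-a * s) * besselI0 s
      = Real.Gamma n / a ^ n *
          hyp2F1one ((n : ℝ) / 2) (((n : ℝ) + 1) / 2) (1 / a ^ 2) := by
  have ha0 : 0 < a := lt_trans one_pos ha
  have ha' : a ≠ 0 := ha0.ne'
  have hx : (0:ℝ) < n := by exact_mod_cast Nat.lt_of_lt_of_le Nat.zero_lt_one hn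
  have hx1 : (1:ℝ) ≤ n := by exact_mod_cast hn
  set F : ℕ → ℝ → ℝ := fun m s =>
    s ^ (n-1) * Real.exp (-a*s) * ((s/2)^(2*m) / ((m.factorial : ℝ))^2) with hF
  set T : ℕ → ℝ := fun m =>
    Real.Gamma ((n:ℝ) + 2*m) / (a ^ (n + 2*m) * 4^m * ((m.factorial : ℝ))^2) with hT
  have hfac : ∀ m : ℕ, ((m.factorial : ℝ)) ≠ 0 :=
    fun m => Nat.cast_ne_zero.2 m.factorial_ne_zero
  have hFg : ∀ m s, F m s = (1/(4^m * ((m.factorial : ℝ))^2)) *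
      (s^(n-1+2*m) * Real.exp (-a*s)) := by
    intro m s
    have h4 : (4:ℝ)^m = 2^(2*m) := by rw [pow_mul]; norm_num
    rw [hF, pow_add]
    simp only []
    rw [div_pow, h4]
    field_simp
  have hFint : ∀ m, IntegrableOn (F m) (Ioi (0:ℝ)) := by
    intro m
    have h := (integrable_pow_exp ha0 (n-1+2*m)).const_mul (1/(4^m * ((m.factorial : ℝ))^2))
    exact IntegrableOn.congr_fun h (fun s _ => (hFg m s).symm) measurableSet_Ioi
  have hTpos : ∀ m, 0 < T m := by
    intro m
    exact div_pos (Real.Gamma_pos_of_pos (by positivity)) (by positivity)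
  have hint : ∀ m, ∫ s in Ioi (0:ℝ), F m s = T m := by
    intro m
    simp_rw [hFg]
    rw [MeasureTheory.integral_const_mul, integral_pow_exp ha0]
    have e2 : n - 1 + 2*m + 1 = n + 2*m := by omega
    have e1 : ((n-1+2*m : ℕ):ℝ) + 1 = (n:ℝ) + 2*(m:ℝ) := by
      rw [show ((n-1+2*m : ℕ):ℝ) + 1 = ((n-1+2*m+1 : ℕ):ℝ) by push_cast; ring, e2]
      push_cast; ring
    rw [e1, e2]
    simp only [hT]
    rw [div_mul_div_comm, one_mul]
    ring_nf
  have hterm : ∀ m : ℕ, Real.Gamma n / a ^ n *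
      ((poch ((n:ℝ)/2) m * poch (((n:ℝ)+1)/2) m / (poch 1 m * (m.factorial : ℝ))) *
        (1/a^2)^m) = T m := by
    intro m
    rw [poch_one']
    simp only [hT]
    rw [show (n:ℝ) + 2*(m:ℝ) = (n:ℝ) + ((2*m : ℕ):ℝ) by push_cast; ring,
      Gamma_mul_poch hx (2*m), ← poch_dup hx m]
    have hpow : a ^ (n + 2*m) = a^n * (a^2)^m := by rw [pow_add, pow_mul]
    rw [hpow, div_pow, one_pow]
    have h4 : ((4:ℝ))^m ≠ 0 := by positivity
    have h2 : ((a:ℝ)^2)^m ≠ 0 := by positivity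
    field_simp
  have hrec : ∀ m : ℕ, T (m+1) =
      T m * (((n:ℝ)+2*m) * ((n:ℝ)+2*m+1) / (a^2 * 4 * ((m:ℝ)+1)^2)) := by
    intro m
    have hg : Real.Gamma ((n:ℝ) + 2*((m:ℝ)+1))
        = ((n:ℝ)+2*m+1) * (((n:ℝ)+2*m) * Real.Gamma ((n:ℝ)+2*m)) := by
      rw [show (n:ℝ) + 2*((m:ℝ)+1) = ((n:ℝ) + 2*m + 1) + 1 by ring,
        Real.Gamma_add_one (by positivity),
        show (n:ℝ) + 2*(m:ℝ) + 1 = ((n:ℝ) + 2*m) + 1 from rfl,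
        Real.Gamma_add_one (by positivity)]
    rw [hT]
    simp only []
    push_cast
    rw [hg, show n + 2*(m+1) = (n + 2*m) + 2 by ring, pow_add, pow_succ,
      Nat.factorial_succ]
    push_cast
    have h4 : ((4:ℝ))^m ≠ 0 := by positivity
    have hm1 : ((m:ℝ)+1) ≠ 0 := by positivity
    field_simp
    ring
  have hsum : Summable T := by
    have ha2 : 1 < a^2 := by nlinarith
    set r : ℝ := (1 + a^2)/(2*a^2) with hr
    have hr1 : r < 1 := by rw [hr, div_lt_one (by positivity)]; nlinarith
    apply summable_of_ratio_norm_eventually_le hr1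
    rw [Filter.eventually_atTop]
    refine ⟨⌈((n:ℝ)^2 + 4*n)/(2*(a^2-1))⌉₊ + 1, fun m hm => ?_⟩
    have hm1 : (1:ℝ) ≤ m := by
      have : 1 ≤ m := le_trans (Nat.le_add_left 1 _) hm
      exact_mod_cast this
    have hm2 : (n:ℝ)^2 + 4*n ≤ 2*(a^2-1)*m := by
      have h1 : ((n:ℝ)^2+4*(n:ℝ))/(2*(a^2-1)) ≤ (m:ℝ) := by
        refine le_trans (Nat.le_ceil _) ?_
        exact_mod_cast le_trans (Nat.le_succ _) hm
      rw [div_le_iff₀ (by nlinarith)] at h1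
      nlinarith
    rw [Real.norm_of_nonneg (hTpos _).le, Real.norm_of_nonneg (hTpos _).le, hrec]
    have hra : r * (a^2*4*((m:ℝ)+1)^2) = 2*(1+a^2)*((m:ℝ)+1)^2 := by
      rw [hr]; field_simp; ring
    have key : ((n:ℝ)+2*m) * ((n:ℝ)+2*m+1) / (a^2*4*((m:ℝ)+1)^2) ≤ r := by
      rw [div_le_iff₀ (by positivity), hra]
      nlinarith [mul_le_mul_of_nonneg_right hm2 (le_trans zero_le_one hm1), hm2, hm1, hx1,
        sq_nonneg ((n:ℝ) - 1)]
    calc T m * (((n:ℝ)+2*m) * ((n:ℝ)+2*m+1) / (a^2 * 4 * ((m:ℝ)+1)^2))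
        ≤ T m * r := mul_le_mul_of_nonneg_left key (hTpos m).le
      _ = r * T m := mul_comm _ _
  have hnormint : ∀ m, ∫ s in Ioi (0:ℝ), ‖F m s‖ = T m := by
    intro m
    rw [← hint m]
    refine setIntegral_congr_fun measurableSet_Ioi (fun s hs => ?_)
    have hs0 : 0 < s := hs
    exact Real.norm_of_nonneg (by rw [hF]; positivity)
  have hF_sum : Summable (fun m => ∫ s in Ioi (0:ℝ), ‖F m s‖) :=
    hsum.congr (fun m => (hnormint m).symm)
  have hbessel : ∀ s : ℝ, s ^ (n-1) * Real.exp (-a*s) * besselI0 s = ∑' m, F m s := by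
    intro s
    rw [besselI0, ← tsum_mul_left]
  calc ∫ s in Ioi (0:ℝ), s ^ (n-1) * Real.exp (-a*s) * besselI0 s
      = ∫ s in Ioi (0:ℝ), ∑' m, F m s := by
        exact setIntegral_congr_fun measurableSet_Ioi (fun s _ => hbessel s)
    _ = ∑' m, ∫ s in Ioi (0:ℝ), F m s :=
        (integral_tsum_of_summable_integral_norm hFint hF_sum).symm
    _ = ∑' m, T m := tsum_congr hint
    _ = Real.Gamma n / a ^ n *
          hyp2F1one ((n : ℝ) / 2) (((n : ℝ) + 1) / 2) (1 / a ^ 2) := by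
        rw [hyp2F1one, ← tsum_mul_left]
        exact tsum_congr fun m => (hterm m).symm
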